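/- Let r be a positive integer all of whose prime factors p satisfy p ≡ 1 (mod 6), let k be an integer with r dividing 1 + k + k², and let m be a positive integer. Then the subgroup of GL(3,ℂ) generated by B_{r,k} and E_m (this is the group T_r^{(k)}(m)) has order 3^m·r. -/

import Mathlib

open Matrix

/-- The matrix `B_{n,k} = diag(ν, ν^k, ν^{−1−k})` with `ν = exp(2πi/n)`. -/
noncomputable def Bmatrix (n : ℕ) (k : ℤ) : Matrix (Fin 3) (Fin 3) ℂ :=
  Matrix.diagonal ![Complex.exp (2 * (Real.pi : ℂ) * Complex.I / (n : ℂ)),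
    Complex.exp (2 * (Real.pi : ℂ) * Complex.I / (n : ℂ)) ^ k,
    Complex.exp (2 * (Real.pi : ℂ) * Complex.I / (n : ℂ)) ^ (-1 - k)]

/-- The matrix `E_m`, with entries `μ = exp(2πi/3^m)` in positions `(0,1)`, `(1,2)`, `(2,0)`
and `0` elsewhere. -/
noncomputable def EMmatrix (m : ℕ) : Matrix (Fin 3) (Fin 3) ℂ :=
  Complex.exp (2 * (Real.pi : ℂ) * Complex.I / ((3 : ℂ) ^ m)) •
    (!![0, 1, 0; 0, 0, 1; 1, 0, 0] : Matrix (Fin 3) (Fin 3) ℂ)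

lemma exp_zpow_eq_one_iff' (n : ℕ) (hn : 0 < n) (x : ℤ) :
    Complex.exp (2 * (Real.pi : ℂ) * Complex.I / (n : ℂ)) ^ x = 1 ↔ (n:ℤ) ∣ x := by
  have hn' : (n:ℂ) ≠ 0 := Nat.cast_ne_zero.mpr hn.ne'
  have h2 : (2*(Real.pi:ℂ)*Complex.I : ℂ) ≠ 0 := Complex.two_pi_I_ne_zero
  rw [← Complex.exp_int_mul, Complex.exp_eq_one_iff]
  constructor
  · rintro ⟨t, ht⟩
    refine ⟨t, ?_⟩
    have hx : (x:ℂ) = ((n * t : ℤ) : ℂ) := by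
      push_cast
      apply mul_right_cancel₀ h2
      field_simp at ht
      linear_combination (2 * (Real.pi:ℂ) * Complex.I) * ht
    exact_mod_cast hx
  · rintro ⟨t, rfl⟩
    exact ⟨t, by field_simp; push_cast; ring⟩

lemma conj_pow' {G : Type*} [Group G] (g x : G) (n : ℕ) :
    g * x ^ n * g⁻¹ = (g * x * g⁻¹) ^ n := by
  simpa using (map_pow (MulAut.conj g) x n).symm

lemma conj_zpow' {G : Type*} [Group G] (g x : G) (n : ℤ) :
    g * x ^ n * g⁻¹ = (g * x * g⁻¹) ^ n := by
  simpa using (map_zpow (MulAut.conj g) x n).symm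

/-- The group `T_r^{(k)}(m)`, generated by `B_{r,k}` and `E_m` inside `GL(3,ℂ)`,
has order `3^m·r`. -/
theorem T_rk_order (r : ℕ) (hr : 0 < r)
    (hrprime : ∀ p : ℕ, p.Prime → p ∣ r → p % 6 = 1)
    (k : ℤ) (hk : (r : ℤ) ∣ 1 + k + k ^ 2)
    (m : ℕ) (hm : 0 < m)
    (B Em : GL (Fin 3) ℂ)
    (hB : B.val = Bmatrix r k) (hEm : Em.val = EMmatrix m) :
    Nat.card ↥(Subgroup.closure ({B, Em} : Set (GL (Fin 3) ℂ))) = 3 ^ m * r := by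
  have h3m : 0 < 3 ^ m := pow_pos (by norm_num) m
  set ν : ℂ := Complex.exp (2 * (Real.pi : ℂ) * Complex.I / (r : ℂ)) with hνdef
  set μ : ℂ := Complex.exp (2 * (Real.pi : ℂ) * Complex.I / ((3:ℕ) ^ m : ℕ)) with hμdef
  set P : Matrix (Fin 3) (Fin 3) ℂ := !![0,1,0;0,0,1;1,0,0] with hPdef
  have hν0 : ν ≠ 0 := Complex.exp_ne_zero _
  have hμ0 : μ ≠ 0 := Complex.exp_ne_zero _
  have hνord : ∀ x : ℤ, ν ^ x = 1 ↔ (r:ℤ) ∣ x := exp_zpow_eq_one_iff' r hr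
  have hμord : ∀ x : ℤ, μ ^ x = 1 ↔ ((3^m : ℕ):ℤ) ∣ x := exp_zpow_eq_one_iff' (3^m) h3m
  have hBv : B.val = Matrix.diagonal ![ν, ν ^ k, ν ^ (-1 - k)] := by
    rw [hB, Bmatrix]
  have hEv : Em.val = μ • P := by
    rw [hEm, EMmatrix, hμdef, hPdef]
    norm_cast
  -- congruence lemma for powers of ν
  have hνcong : ∀ a b : ℤ, a ≡ b [ZMOD (r:ℤ)] → ν ^ a = ν ^ b := by
    intro a b hab
    obtain ⟨t, ht⟩ := Int.ModEq.dvd hab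
    have : b = a + (r:ℤ) * t := by linarith
    rw [this, zpow_add₀ hν0, _root_.zpow_mul, (hνord r).mpr dvd_rfl, _root_.one_zpow, mul_one]
  -- powers of B.val
  have hBvpow : ∀ x : ℕ, B.val ^ x =
      Matrix.diagonal ![ν ^ (x:ℤ), ν ^ (k * x), ν ^ ((-1-k) * x)] := by
    intro x
    have hvec : (![ν, ν ^ k, ν ^ (-1 - k)]) ^ x =
        ![ν ^ (x:ℤ), ν ^ (k * x), ν ^ ((-1-k) * x)] := by
      funext i
      fin_cases i
      · show ν ^ x = ν ^ (x:ℤ)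
        rw [zpow_natCast]
      · show (ν ^ k) ^ x = ν ^ (k * x)
        rw [← zpow_natCast (ν ^ k) x, ← _root_.zpow_mul]
      · show (ν ^ (-1-k)) ^ x = ν ^ ((-1-k) * x)
        rw [← zpow_natCast (ν ^ (-1-k)) x, ← _root_.zpow_mul]
    rw [hBv, Matrix.diagonal_pow, hvec]
  -- powers of P
  have hP3 : P ^ 3 = 1 := by
    rw [hPdef, pow_succ, pow_succ, pow_one, Matrix.mul_fin_three, Matrix.mul_fin_three,
      Matrix.one_fin_three]
    norm_num
  have hPn : ∀ y : ℕ, P ^ y = P ^ (y % 3) := by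
    intro y
    conv_lhs => rw [← Nat.div_add_mod y 3]
    rw [pow_add, pow_mul, hP3, one_pow, one_mul]
  have hEvpow : ∀ y : ℕ, Em.val ^ y = μ ^ y • P ^ (y % 3) := by
    intro y
    rw [hEv, smul_pow, ← hPn]
  -- the key matrix computation
  have hcop3 : ¬ (3 ∣ r) := by
    intro h3
    have := hrprime 3 (by norm_num) h3
    norm_num at this
  have key : ∀ x y : ℕ, B.val ^ x = Em.val ^ y → r ∣ x ∧ 3^m ∣ y := by
    intro x y h
    rw [hBvpow, hEvpow] at h
    have hy3 : y % 3 < 3 := Nat.mod_lt _ (by norm_num)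
    interval_cases hs : (y % 3)
    · -- y % 3 = 0
      have h00 := congrFun (congrFun h 0) 0
      rw [pow_zero] at h00
      simp [Matrix.diagonal, Matrix.smul_apply, Matrix.one_apply] at h00
      rw [← zpow_natCast ν x] at h00
      -- h00 : ν ^ (x:ℤ) = μ ^ y
      have hμ3m : μ ^ (3^m : ℕ) = 1 := by
        have := (hμord ((3^m : ℕ):ℤ)).mpr dvd_rfl
        rwa [zpow_natCast] at this
      have hy3 : 3 ∣ y := Nat.dvd_of_mod_eq_zero hs
      obtain ⟨t, rfl⟩ := hy3
      have hζr : (ν ^ (x:ℤ)) ^ (r : ℕ) = 1 := by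
        rw [← zpow_natCast (ν ^ (x:ℤ)), ← _root_.zpow_mul]
        exact (hνord _).mpr ⟨x, by ring⟩
      have hζ3 : (ν ^ (x:ℤ)) ^ (3^(m-1) : ℕ) = 1 := by
        rw [h00, ← pow_mul]
        have : 3 * t * 3^(m-1) = 3^m * t := by
          rw [show (3:ℕ)^m = 3^(m-1) * 3 by
            rw [← pow_succ, Nat.sub_add_cancel hm]]
          ring
        rw [this, pow_mul, hμ3m, one_pow]
      have hζ0 : ν ^ (x:ℤ) ≠ 0 := zpow_ne_zero _ hν0
      have hcop : Nat.Coprime r (3^(m-1)) :=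
        (((Nat.prime_three.coprime_iff_not_dvd).mpr hcop3).symm).pow_right _
      have hζ1 : ν ^ (x:ℤ) = 1 := by
        have hb := Nat.gcd_eq_gcd_ab r (3^(m-1))
        rw [hcop] at hb
        set ζ := ν ^ (x:ℤ)
        calc ζ = ζ ^ (1:ℤ) := (zpow_one ζ).symm
          _ = ζ ^ ((r:ℤ) * Nat.gcdA r (3^(m-1)) + (3^(m-1) : ℕ) * Nat.gcdB r (3^(m-1))) := by
              rw [← hb]; norm_num
          _ = ((ζ ^ (r:ℕ)) ^ Nat.gcdA r (3^(m-1))) * ((ζ ^ (3^(m-1):ℕ)) ^ Nat.gcdB r (3^(m-1))) := by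
              rw [zpow_add₀ hζ0, _root_.zpow_mul, _root_.zpow_mul, zpow_natCast, zpow_natCast]
          _ = 1 := by rw [hζr, hζ3, _root_.one_zpow, _root_.one_zpow, mul_one]
      constructor
      · have := (hνord (x:ℤ)).mp hζ1
        exact_mod_cast this
      · have hμy : μ ^ ((3*t : ℕ):ℤ) = 1 := by
          rw [zpow_natCast, ← h00, hζ1]
        have := (hμord _).mp hμy
        exact_mod_cast this
    · -- y % 3 = 1 : impossible
      exfalso
      have h01 := congrFun (congrFun h 0) 1
      rw [pow_one] at h01
      simp [Matrix.diagonal, hPdef, Matrix.smul_apply] at h01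
      exact pow_ne_zero y hμ0 h01.symm
    · -- y % 3 = 2 : impossible
      exfalso
      have h02 := congrFun (congrFun h 0) 2
      rw [pow_two] at h02
      simp [Matrix.diagonal, hPdef, Matrix.smul_apply, Matrix.mul_apply,
        Fin.sum_univ_three] at h02
      exact pow_ne_zero y hμ0 h02.symm
  -- order facts at GL level
  have hμ3m' : μ ^ (3^m : ℕ) = 1 := by
    have := (hμord ((3^m : ℕ):ℤ)).mpr dvd_rfl
    rwa [zpow_natCast] at this
  have hBr : B ^ ((r:ℕ):ℤ) = 1 := by
    rw [zpow_natCast]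
    apply Units.ext
    rw [Units.val_pow_eq_pow_val, hBvpow]
    have e0 : ν ^ ((r:ℕ):ℤ) = 1 := (hνord _).mpr dvd_rfl
    have e1 : ν ^ (k * r) = 1 := (hνord _).mpr ⟨k, by ring⟩
    have e2 : ν ^ ((-1-k) * r) = 1 := (hνord _).mpr ⟨-1-k, by ring⟩
    rw [e0, e1, e2]
    have hone : (![ (1:ℂ), 1, 1]) = fun _ => 1 := by funext i; fin_cases i <;> rfl
    rw [hone]
    simp [Matrix.diagonal_one]
  have hEr : Em ^ ((3^m : ℕ):ℤ) = 1 := by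
    rw [zpow_natCast]
    apply Units.ext
    rw [Units.val_pow_eq_pow_val, hEvpow]
    have h30 : 3^m % 3 = 0 := by
      rw [show m = m - 1 + 1 from (Nat.sub_add_cancel hm).symm, pow_succ]
      simp [Nat.mul_mod]
    rw [h30, pow_zero, hμ3m', one_smul, Units.val_one]
  have hBcong : ∀ a b : ℤ, a ≡ b [ZMOD (r:ℤ)] → B ^ a = B ^ b := by
    intro a b hab
    obtain ⟨t, ht⟩ := hab.dvd
    have hb : b = a + (r:ℤ) * t := by linarith
    rw [hb, _root_.zpow_add, _root_.zpow_mul, hBr, _root_.one_zpow, mul_one]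
  have hEcong : ∀ a b : ℤ, a ≡ b [ZMOD ((3^m : ℕ):ℤ)] → Em ^ a = Em ^ b := by
    intro a b hab
    obtain ⟨t, ht⟩ := hab.dvd
    have hb : b = a + ((3^m : ℕ):ℤ) * t := by linarith
    rw [hb, _root_.zpow_add, _root_.zpow_mul, hEr, _root_.one_zpow, mul_one]
  have keyZ : ∀ x y : ℤ, B ^ x = Em ^ y → (r:ℤ) ∣ x ∧ ((3^m : ℕ):ℤ) ∣ y := by
    intro x y h
    have hrne : (r:ℤ) ≠ 0 := by exact_mod_cast hr.ne'
    have h3ne : ((3^m : ℕ):ℤ) ≠ 0 := by exact_mod_cast h3m.ne'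
    have hx0 : 0 ≤ x % (r:ℤ) := Int.emod_nonneg x hrne
    have hy0 : 0 ≤ y % ((3^m : ℕ):ℤ) := Int.emod_nonneg y h3ne
    set x' : ℕ := (x % (r:ℤ)).toNat with hx'def
    set y' : ℕ := (y % ((3^m : ℕ):ℤ)).toNat with hy'def
    have hx'' : (x' : ℤ) = x % (r:ℤ) := Int.toNat_of_nonneg hx0
    have hy'' : (y' : ℤ) = y % ((3^m : ℕ):ℤ) := Int.toNat_of_nonneg hy0
    have hmodx : x ≡ (x' : ℤ) [ZMOD (r:ℤ)] := by
      show x % (r:ℤ) = (x':ℤ) % (r:ℤ)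
      rw [hx'', Int.emod_emod_of_dvd _ dvd_rfl]
    have hmody : y ≡ (y' : ℤ) [ZMOD ((3^m : ℕ):ℤ)] := by
      show y % _ = (y':ℤ) % _
      rw [hy'', Int.emod_emod_of_dvd _ dvd_rfl]
    have h1 : B ^ ((x':ℕ):ℤ) = Em ^ ((y':ℕ):ℤ) := by
      rw [← hBcong x _ hmodx, ← hEcong y _ hmody]; exact h
    rw [zpow_natCast, zpow_natCast] at h1
    have h2 : B.val ^ x' = Em.val ^ y' := by
      have := congrArg Units.val h1
      rwa [Units.val_pow_eq_pow_val, Units.val_pow_eq_pow_val] at this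
    obtain ⟨hdx, hdy⟩ := key x' y' h2
    constructor
    · have hd1 : (r:ℤ) ∣ x % (r:ℤ) := by rw [← hx'']; exact_mod_cast hdx
      have := Int.mul_ediv_add_emod x (r:ℤ)
      exact Dvd.dvd.trans dvd_rfl (by rw [← this]; exact dvd_add (Dvd.intro _ rfl) hd1)
    · have hd1 : ((3^m : ℕ):ℤ) ∣ y % ((3^m : ℕ):ℤ) := by rw [← hy'']; exact_mod_cast hdy
      have := Int.mul_ediv_add_emod y ((3^m : ℕ):ℤ)
      exact Dvd.dvd.trans dvd_rfl (by rw [← this]; exact dvd_add (Dvd.intro _ rfl) hd1)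
  -- conjugation relation
  have hrne : (r:ℤ) ≠ 0 := by exact_mod_cast hr.ne'
  set k'' : ℕ := (k % (r:ℤ)).toNat with hk''def
  have hk''z : (k'' : ℤ) = k % (r:ℤ) := Int.toNat_of_nonneg (Int.emod_nonneg k hrne)
  have hkk : (k'':ℤ) ≡ k [ZMOD (r:ℤ)] := by
    show (k'':ℤ) % _ = k % _
    rw [hk''z, Int.emod_emod_of_dvd _ dvd_rfl]
  have hm1 : ν ^ k = ν ^ ((k'':ℕ):ℤ) := hνcong _ _ hkk.symm
  have hm2 : ν ^ (-1-k) = ν ^ (k * k'') := by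
    apply hνcong
    have c1 : k * k ≡ k * (k'':ℤ) [ZMOD (r:ℤ)] := (Int.ModEq.mul_left k hkk).symm
    refine Int.ModEq.trans ?_ c1
    show Int.ModEq _ _ _
    rw [Int.modEq_iff_dvd]
    have he : k * k - (-1-k) = 1 + k + k^2 := by ring
    rw [he]
    exact hk
  have hm3 : ν = ν ^ ((-1-k) * k'') := by
    conv_lhs => rw [show ν = ν ^ (1:ℤ) from (zpow_one ν).symm]
    apply hνcong
    have c1 : (-1-k) * k ≡ (-1-k) * (k'':ℤ) [ZMOD (r:ℤ)] := (Int.ModEq.mul_left _ hkk).symm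
    refine Int.ModEq.trans ?_ c1
    rw [Int.modEq_iff_dvd]
    have he : (-1-k) * k - 1 = -(1 + k + k^2) := by ring
    rw [he]
    exact Dvd.dvd.neg_right hk
  have hconj1 : Em * B = B ^ k'' * Em := by
    apply Units.ext
    rw [Units.val_mul, Units.val_mul, Units.val_pow_eq_pow_val, hEv, hBvpow, hBv]
    rw [smul_mul_assoc, mul_smul_comm]
    congr 1
    ext i j
    fin_cases i <;> fin_cases j <;>
      simp [hPdef, Matrix.mul_apply, Fin.sum_univ_three, Matrix.diagonal] <;>
      [(rw [← zpow_natCast ν k'']; exact hm1);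
       (exact hm2);
       (exact hm3)]
  have hcomm3 : Em ^ 3 * B = B * Em ^ 3 := by
    apply Units.ext
    rw [Units.val_mul, Units.val_mul, Units.val_pow_eq_pow_val, hEvpow 3]
    norm_num
  have hconj1' : Em * B * Em⁻¹ = B ^ k'' := by rw [hconj1]; group
  have hconj2 : Em⁻¹ * B * Em = B ^ (k'' * k'') := by
    have hB3 : Em ^ 3 * B * (Em ^ 3)⁻¹ = B := by rw [hcomm3]; group
    have h2 : Em ^ 2 * B * (Em ^ 2)⁻¹ = B ^ (k'' * k'') := by
      have e : Em ^ 2 * B * (Em ^ 2)⁻¹ = Em * (Em * B * Em⁻¹) * Em⁻¹ := by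
        rw [pow_two]; group
      rw [e, hconj1', conj_pow', hconj1', ← pow_mul]
    calc Em⁻¹ * B * Em = Em⁻¹ * (Em ^ 3 * B * (Em ^ 3)⁻¹) * Em := by rw [hB3]
      _ = Em ^ 2 * B * (Em ^ 2)⁻¹ := by group
      _ = B ^ (k'' * k'') := h2
  have hconjb : ∀ b : ℤ, ∃ j : ℕ, Em ^ b * B * (Em ^ b)⁻¹ = B ^ j := by
    intro b
    induction b using Int.induction_on with
    | zero => exact ⟨1, by simp⟩
    | succ i ih =>
        obtain ⟨j, hj⟩ := ih
        refine ⟨k'' * j, ?_⟩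
        have e : Em ^ ((i:ℤ)+1) * B * (Em ^ ((i:ℤ)+1))⁻¹
            = Em * (Em ^ (i:ℤ) * B * (Em ^ (i:ℤ))⁻¹) * Em⁻¹ := by group
        rw [e, hj, conj_pow', hconj1', ← pow_mul]
    | pred i ih =>
        obtain ⟨j, hj⟩ := ih
        refine ⟨k'' * k'' * j, ?_⟩
        have e : Em ^ (-(i:ℤ)-1) * B * (Em ^ (-(i:ℤ)-1))⁻¹
            = Em⁻¹ * (Em ^ (-(i:ℤ)) * B * (Em ^ (-(i:ℤ)))⁻¹) * Em := by group
        rw [e, hj]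
        calc Em⁻¹ * B ^ j * Em = Em⁻¹ * B ^ j * Em⁻¹⁻¹ := by rw [inv_inv]
          _ = (Em⁻¹ * B * Em⁻¹⁻¹) ^ j := conj_pow' _ _ _
          _ = (B ^ (k'' * k'')) ^ j := by rw [inv_inv, hconj2]
          _ = B ^ (k'' * k'' * j) := by rw [← pow_mul]
  have hswap : ∀ b c : ℤ, ∃ j : ℤ, Em ^ b * B ^ c = B ^ j * Em ^ b := by
    intro b c
    obtain ⟨j, hj⟩ := hconjb b
    refine ⟨(j:ℤ) * c, ?_⟩
    calc Em ^ b * B ^ c = (Em ^ b * B * (Em ^ b)⁻¹) ^ c * Em ^ b := by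
          rw [← conj_zpow']; group
      _ = (B ^ j) ^ c * Em ^ b := by rw [hj]
      _ = B ^ ((j:ℤ) * c) * Em ^ b := by rw [← zpow_natCast B j, ← _root_.zpow_mul]
  -- the closure as an explicit subgroup
  let H' : Subgroup (GL (Fin 3) ℂ) :=
    { carrier := {g | ∃ a b : ℤ, g = B ^ a * Em ^ b}
      one_mem' := ⟨0, 0, by simp⟩
      mul_mem' := by
        rintro x y ⟨a, b, rfl⟩ ⟨c, d, rfl⟩
        obtain ⟨j, hj⟩ := hswap b c
        refine ⟨a + j, b + d, ?_⟩
        calc B ^ a * Em ^ b * (B ^ c * Em ^ d) = B ^ a * (Em ^ b * B ^ c) * Em ^ d := by group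
          _ = B ^ a * (B ^ j * Em ^ b) * Em ^ d := by rw [hj]
          _ = B ^ (a + j) * Em ^ (b + d) := by rw [_root_.zpow_add, _root_.zpow_add]; group
      inv_mem' := by
        rintro x ⟨a, b, rfl⟩
        obtain ⟨j, hj⟩ := hswap (-b) (-a)
        refine ⟨j, -b, ?_⟩
        calc (B ^ a * Em ^ b)⁻¹ = Em ^ (-b) * B ^ (-a) := by
              rw [_root_.zpow_neg, _root_.zpow_neg]; group
          _ = B ^ j * Em ^ (-b) := hj }
  have hHH : Subgroup.closure ({B, Em} : Set (GL (Fin 3) ℂ)) = H' := by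
    apply le_antisymm
    · rw [Subgroup.closure_le]
      rintro x (rfl | rfl)
      · exact ⟨1, 0, by simp⟩
      · exact ⟨0, 1, by simp⟩
    · rintro g ⟨a, b, rfl⟩
      exact mul_mem (zpow_mem (Subgroup.subset_closure (by simp)) _)
        (zpow_mem (Subgroup.subset_closure (by simp)) _)
  -- counting
  haveI : NeZero r := ⟨hr.ne'⟩
  haveI : NeZero (3^m) := ⟨h3m.ne'⟩
  let f : ZMod (3^m) × ZMod r → ↥(Subgroup.closure ({B, Em} : Set (GL (Fin 3) ℂ))) :=
    fun p => ⟨B ^ ((p.2.val : ℤ)) * Em ^ ((p.1.val : ℤ)), by rw [hHH]; exact ⟨_, _, rfl⟩⟩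
  have hinj : Function.Injective f := by
    intro p q hpq
    have h0 : B ^ ((p.2.val:ℤ)) * Em ^ ((p.1.val:ℤ))
        = B ^ ((q.2.val:ℤ)) * Em ^ ((q.1.val:ℤ)) := congrArg Subtype.val hpq
    have hkey : B ^ ((p.2.val:ℤ) - q.2.val) = Em ^ ((q.1.val:ℤ) - p.1.val) := by
      have e1 : B ^ ((p.2.val:ℤ) - q.2.val) = (B ^ ((q.2.val:ℤ)))⁻¹ * B ^ ((p.2.val:ℤ)) := by
        rw [show (p.2.val:ℤ) - q.2.val = -(q.2.val:ℤ) + p.2.val by ring,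
          _root_.zpow_add, _root_.zpow_neg]
      have e2 : Em ^ ((q.1.val:ℤ) - p.1.val)
          = Em ^ ((q.1.val:ℤ)) * (Em ^ ((p.1.val:ℤ)))⁻¹ := by
        rw [_root_.zpow_sub]
      rw [e1, e2]
      calc (B ^ ((q.2.val:ℤ)))⁻¹ * B ^ ((p.2.val:ℤ))
          = (B ^ ((q.2.val:ℤ)))⁻¹ * (B ^ ((p.2.val:ℤ)) * Em ^ ((p.1.val:ℤ)))
            * (Em ^ ((p.1.val:ℤ)))⁻¹ := by group
        _ = (B ^ ((q.2.val:ℤ)))⁻¹ * (B ^ ((q.2.val:ℤ)) * Em ^ ((q.1.val:ℤ)))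
            * (Em ^ ((p.1.val:ℤ)))⁻¹ := by rw [h0]
        _ = Em ^ ((q.1.val:ℤ)) * (Em ^ ((p.1.val:ℤ)))⁻¹ := by group
    obtain ⟨hdx, hdy⟩ := keyZ _ _ hkey
    have hlt1 := ZMod.val_lt p.2
    have hlt2 := ZMod.val_lt q.2
    have hlt3 := ZMod.val_lt p.1
    have hlt4 := ZMod.val_lt q.1
    have hc1 : ((p.2.val:ℤ)) < (r:ℤ) := by exact_mod_cast hlt1
    have hc2 : ((q.2.val:ℤ)) < (r:ℤ) := by exact_mod_cast hlt2
    have hc3 : ((p.1.val:ℤ)) < ((3^m:ℕ):ℤ) := by exact_mod_cast hlt3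
    have hc4 : ((q.1.val:ℤ)) < ((3^m:ℕ):ℤ) := by exact_mod_cast hlt4
    have hn1 : (0:ℤ) ≤ (p.2.val:ℤ) := Int.natCast_nonneg _
    have hn2 : (0:ℤ) ≤ (q.2.val:ℤ) := Int.natCast_nonneg _
    have hn3 : (0:ℤ) ≤ (p.1.val:ℤ) := Int.natCast_nonneg _
    have hn4 : (0:ℤ) ≤ (q.1.val:ℤ) := Int.natCast_nonneg _
    have hz1 : (p.2.val:ℤ) - q.2.val = 0 := by
      refine Int.eq_zero_of_abs_lt_dvd hdx ?_
      rw [abs_sub_lt_iff]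
      constructor <;> linarith
    have hz2 : (q.1.val:ℤ) - p.1.val = 0 := by
      refine Int.eq_zero_of_abs_lt_dvd hdy ?_
      rw [abs_sub_lt_iff]
      constructor <;> linarith
    have hv2 : p.2.val = q.2.val := by omega
    have hv1 : p.1.val = q.1.val := by omega
    exact Prod.ext (ZMod.val_injective _ hv1) (ZMod.val_injective _ hv2)
  have hsurj : Function.Surjective f := by
    rintro ⟨g, hg⟩
    rw [hHH] at hg
    obtain ⟨a, b, rfl⟩ := hg
    refine ⟨((b : ZMod (3^m)), (a : ZMod r)), ?_⟩
    apply Subtype.ext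
    show B ^ (((a : ZMod r).val : ℤ)) * Em ^ (((b : ZMod (3^m)).val : ℤ)) = B ^ a * Em ^ b
    congr 1
    · apply hBcong
      show _ % _ = _ % _
      rw [ZMod.val_intCast, Int.emod_emod_of_dvd _ dvd_rfl]
    · apply hEcong
      show _ % _ = _ % _
      rw [ZMod.val_intCast, Int.emod_emod_of_dvd _ dvd_rfl]
  have := Nat.card_eq_of_bijective f ⟨hinj, hsurj⟩
  rw [← this, Nat.card_prod, Nat.card_zmod, Nat.card_zmod]
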